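/- Let r ≤ n, let N ∈ ℝ^{n×r}, let w_1,…,w_r > 0 with Λ_w = diag(w_1,…,w_r), and set Ξ = C^{-1/2} N Λ_w ∈ ℝ^{n×r}. Let ξ_1,…,ξ_r ≥ 0 denote the singular values of Ξ, i.e. the square roots of the eigenvalues of Ξᵀ Ξ. Then for every a ∈ ℝ^{n×r} with aᵀ Σ a = I_r, tr(aᵀ Λ_σ N Λ_w) ≤ Σ_{i=1}^r ξ_i. -/

import Mathlib

open Matrix BigOperators

section
open scoped ComplexOrder

/-- The positive semidefinite square root of a positive semidefinite matrix
(Mathlib's former `Matrix.PosSemidef.sqrt`, removed upstream; restored with its old definition). -/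
noncomputable def Matrix.PosSemidef.sqrt {n 𝕜 : Type*} [Fintype n] [RCLike 𝕜] [DecidableEq n]
    {A : Matrix n n 𝕜} (hA : A.PosSemidef) : Matrix n n 𝕜 :=
  (hA.1.eigenvectorUnitary : Matrix n n 𝕜) * diagonal ((↑) ∘ (Real.sqrt ∘ hA.1.eigenvalues)) *
    (star hA.1.eigenvectorUnitary : Matrix n n 𝕜)

end

lemma nuclear_bound {n r : ℕ} (b X : Matrix (Fin n) (Fin r) ℝ)
    (hb : bᵀ * b = 1) (hXh : (Xᵀ * X).IsHermitian) :
    (bᵀ * X).trace ≤ ∑ i, Real.sqrt (hXh.eigenvalues i) := by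
  classical
  set U : Matrix (Fin r) (Fin r) ℝ := (hXh.eigenvectorUnitary : Matrix (Fin r) (Fin r) ℝ) with hUdef
  have hU1 : U * Uᵀ = 1 := by
    have := (Matrix.mem_unitaryGroup_iff).mp hXh.eigenvectorUnitary.2
    simpa [hUdef, Matrix.star_eq_conjTranspose, conjTranspose_eq_transpose_of_trivial] using this
  have hU2 : Uᵀ * U = 1 := by
    have := (Matrix.mem_unitaryGroup_iff').mp hXh.eigenvectorUnitary.2
    simpa [hUdef, Matrix.star_eq_conjTranspose, conjTranspose_eq_transpose_of_trivial] using this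
  have hspec : Xᵀ * X = U * Matrix.diagonal hXh.eigenvalues * Uᵀ := by
    have := hXh.spectral_theorem
    simpa [hUdef, Matrix.star_eq_conjTranspose, conjTranspose_eq_transpose_of_trivial,
      Function.comp] using this
  have hdiag : Uᵀ * (Xᵀ * X) * U = Matrix.diagonal hXh.eigenvalues := by
    conv_lhs => rw [hspec]
    simp only [← Matrix.mul_assoc]
    rw [hU2, Matrix.one_mul, Matrix.mul_assoc, hU2, Matrix.mul_one]
  have htr : (bᵀ * X).trace = ((b * U)ᵀ * (X * U)).trace := by
    rw [Matrix.transpose_mul, Matrix.trace_mul_cycle, Matrix.mul_assoc X U Uᵀ, hU1,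
      Matrix.mul_one, Matrix.trace_mul_comm]
  rw [htr, Matrix.trace]
  apply Finset.sum_le_sum
  intro j _
  have hd : Matrix.diag ((b * U)ᵀ * (X * U)) j = ∑ k, (b * U) k j * (X * U) k j := by
    rw [Matrix.diag, Matrix.mul_apply]
    simp only [Matrix.transpose_apply]
  have h1 : ∑ k, (b * U) k j ^ 2 = 1 := by
    have e1 : ((b * U)ᵀ * (b * U)) = 1 := by
      rw [Matrix.transpose_mul]
      simp only [Matrix.mul_assoc]
      rw [← Matrix.mul_assoc bᵀ b U, hb, Matrix.one_mul, hU2]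
    have : ((b * U)ᵀ * (b * U)) j j = (1 : ℝ) := by rw [e1]; simp
    rw [Matrix.mul_apply] at this
    simp only [Matrix.transpose_apply, ← pow_two] at this
    exact this
  have h2 : ∑ k, (X * U) k j ^ 2 = hXh.eigenvalues j := by
    have e2 : ((X * U)ᵀ * (X * U)) = Matrix.diagonal hXh.eigenvalues := by
      rw [Matrix.transpose_mul, ← hdiag]
      simp only [Matrix.mul_assoc]
    have : ((X * U)ᵀ * (X * U)) j j = hXh.eigenvalues j := by rw [e2]; simp
    rw [Matrix.mul_apply] at this
    simp only [Matrix.transpose_apply, ← pow_two] at this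
    exact this
  have hcs := Finset.sum_mul_sq_le_sq_mul_sq Finset.univ (fun k => (b * U) k j)
    (fun k => (X * U) k j)
  rw [h1, h2, one_mul] at hcs
  rw [hd]
  calc ∑ k, (b * U) k j * (X * U) k j
      ≤ |∑ k, (b * U) k j * (X * U) k j| := le_abs_self _
    _ = Real.sqrt ((∑ k, (b * U) k j * (X * U) k j) ^ 2) := (Real.sqrt_sq_eq_abs _).symm
    _ ≤ Real.sqrt (hXh.eigenvalues j) := Real.sqrt_le_sqrt hcs

/-- **Proxy-VAR OASIS upper bound.** With `Ξ = C^{-1/2} N Λ_w` and singular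
values `ξ_i` (square roots of the eigenvalues of `Ξᵀ Ξ`), every `a` with
`aᵀ Σ a = I_r` satisfies `tr(aᵀ Λ_σ N Λ_w) ≤ Σ_i ξ_i`. -/
theorem stmt_7 {n r : ℕ} (hr : r ≤ n)
    (S : Matrix (Fin n) (Fin n) ℝ) (hS : S.PosDef)
    (Ls : Matrix (Fin n) (Fin n) ℝ)
    (hLs : Ls = Matrix.diagonal (fun i => Real.sqrt (S i i)))
    (C : Matrix (Fin n) (Fin n) ℝ) (hC : C = Ls⁻¹ * S * Ls⁻¹)
    (hCpd : C.PosDef)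
    (N : Matrix (Fin n) (Fin r) ℝ)
    (w : Fin r → ℝ) (hw : ∀ i, 0 < w i)
    (Lw : Matrix (Fin r) (Fin r) ℝ) (hLw : Lw = Matrix.diagonal w)
    (Xi : Matrix (Fin n) (Fin r) ℝ)
    (hXi : Xi = (hCpd.posSemidef.sqrt)⁻¹ * N * Lw)
    (hXh : (Xiᵀ * Xi).IsHermitian)
    (a : Matrix (Fin n) (Fin r) ℝ) (ha : aᵀ * S * a = 1) :
    (aᵀ * Ls * N * Lw).trace ≤ ∑ i, Real.sqrt (hXh.eigenvalues i) := by
  classical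
  -- Ls facts
  have hdiagpos : ∀ i, 0 < S i i := fun i => by
    exact hS.diag_pos
  have hLsPD : Ls.PosDef := by
    rw [hLs]; exact Matrix.posDef_diagonal_iff.mpr fun i => Real.sqrt_pos.mpr (hdiagpos i)
  have hLsdet : IsUnit Ls.det := (Matrix.isUnit_iff_isUnit_det _).mp hLsPD.isUnit
  have hLsInv : Ls * Ls⁻¹ = 1 := Matrix.mul_nonsing_inv _ hLsdet
  have hLsInv' : Ls⁻¹ * Ls = 1 := Matrix.nonsing_inv_mul _ hLsdet
  have hLsT : Lsᵀ = Ls := by rw [hLs]; exact Matrix.diagonal_transpose _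
  -- sqrt of C
  set R : Matrix (Fin n) (Fin n) ℝ := hCpd.posSemidef.sqrt with hRdef
  have hRR : R * R = C := by
    have hsp := hCpd.posSemidef.1.spectral_theorem
    have hU2 := (Matrix.mem_unitaryGroup_iff').mp hCpd.posSemidef.1.eigenvectorUnitary.2
    simp only [Matrix.star_eq_conjTranspose, conjTranspose_eq_transpose_of_trivial] at hU2
    have hsp' : C = (hCpd.posSemidef.1.eigenvectorUnitary : Matrix (Fin n) (Fin n) ℝ) *
        Matrix.diagonal hCpd.posSemidef.1.eigenvalues *
        (hCpd.posSemidef.1.eigenvectorUnitary : Matrix (Fin n) (Fin n) ℝ)ᵀ := by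
      simpa [Matrix.star_eq_conjTranspose, conjTranspose_eq_transpose_of_trivial,
        Function.comp] using hsp
    rw [hsp', hRdef, Matrix.PosSemidef.sqrt]
    simp only [Matrix.star_eq_conjTranspose, conjTranspose_eq_transpose_of_trivial,
      Matrix.mul_assoc]
    rw [← Matrix.mul_assoc _ (hCpd.posSemidef.1.eigenvectorUnitary : Matrix (Fin n) (Fin n) ℝ),
      hU2, Matrix.one_mul, ← Matrix.mul_assoc (Matrix.diagonal _), Matrix.diagonal_mul_diagonal]
    congr 2
    congr 1
    funext i
    simp [Real.mul_self_sqrt (hCpd.posSemidef.eigenvalues_nonneg i)]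
  have hRT : Rᵀ = R := by
    rw [hRdef, Matrix.PosSemidef.sqrt]
    simp [Matrix.star_eq_conjTranspose, conjTranspose_eq_transpose_of_trivial,
      Matrix.transpose_mul, Matrix.mul_assoc]
  have hCdet : IsUnit C.det := (Matrix.isUnit_iff_isUnit_det _).mp hCpd.isUnit
  have hRunit : IsUnit R := by
    have h1 : R * (R * C⁻¹) = 1 := by
      rw [← Matrix.mul_assoc, hRR, Matrix.mul_nonsing_inv _ hCdet]
    exact (Matrix.isUnit_iff_isUnit_det _).mpr (Matrix.isUnit_det_of_right_inverse h1)
  have hRdet : IsUnit R.det := (Matrix.isUnit_iff_isUnit_det _).mp hRunit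
  have hRInv : R * R⁻¹ = 1 := Matrix.mul_nonsing_inv _ hRdet
  -- S = Ls * C * Ls
  have hSC : Ls * C * Ls = S := by
    rw [hC, ← Matrix.mul_assoc, ← Matrix.mul_assoc, hLsInv, Matrix.one_mul, Matrix.mul_assoc,
      hLsInv', Matrix.mul_one]
  -- the matrix b
  set b : Matrix (Fin n) (Fin r) ℝ := R * (Ls * a) with hbdef
  have hbb : bᵀ * b = 1 := by
    rw [hbdef, Matrix.transpose_mul, Matrix.transpose_mul, hRT, hLsT]
    simp only [Matrix.mul_assoc]
    rw [← Matrix.mul_assoc R R, hRR, ← ha, ← hSC]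
    simp only [Matrix.mul_assoc]
  have hbXi : bᵀ * Xi = aᵀ * Ls * N * Lw := by
    rw [hbdef, hXi, Matrix.transpose_mul, Matrix.transpose_mul, hRT, hLsT]
    simp only [Matrix.mul_assoc]
    rw [← Matrix.mul_assoc R R⁻¹, hRInv, Matrix.one_mul]
  rw [← hbXi]
  exact nuclear_bound b Xi hbb hXh
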